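/- Let Q_g : S² → ℝ be integrable with ⟨Q_g⟩ = 0 and ⟨Ω Q_g⟩ = 0 ∈ ℝ³, let ρ_g ∈ ℝ, R_g ∈ ℝ³, and assume ∫_{ν₋}^{ν₊} ω₁ dν = Δν and ∫_{ν₋}^{ν₊} ω₂ dν = Δν. Let I_rec(Ω, ν) be the decomposed reconstruction with r = Ω·R_g and q = Q_g(Ω). Then the reconstruction reproduces the group angular moments exactly: (1/(4π)) ∫_{S²} ∫_{ν₋}^{ν₊} I_rec(Ω, ν) dν dσ(Ω) = ρ_g, and (3/(4π)) ∫_{S²} ∫_{ν₋}^{ν₊} Ω · I_rec(Ω, ν) dν dσ(Ω) = R_g (componentwise). -/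

import Mathlib

open MeasureTheory Real

/-- The surface measure on the unit sphere `S² ⊂ ℝ³`. -/
noncomputable def sphereMeasure :
    Measure (Metric.sphere (0 : EuclideanSpace ℝ (Fin 3)) 1) :=
  (volume : Measure (EuclideanSpace ℝ (Fin 3))).toSphere

open Metric Set Pointwise

local notation "E3" => EuclideanSpace ℝ (Fin 3)
local notation "S2" => Metric.sphere (0 : EuclideanSpace ℝ (Fin 3)) 1

noncomputable def sphereMap (e : E3 ≃ₗᵢ[ℝ] E3) : S2 → S2 :=
  fun Ω => ⟨e Ω, by
    rw [mem_sphere_zero_iff_norm, e.norm_map]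
    exact mem_sphere_zero_iff_norm.1 Ω.2⟩

lemma sphereMap_measurable (e : E3 ≃ₗᵢ[ℝ] E3) : Measurable (sphereMap e) := by
  apply Measurable.subtype_mk
  exact (e.continuous.comp continuous_subtype_val).measurable

lemma sphereMap_measurePreserving (e : E3 ≃ₗᵢ[ℝ] E3) :
    MeasurePreserving (sphereMap e) sphereMeasure sphereMeasure := by
  refine ⟨sphereMap_measurable e, ?_⟩
  refine Measure.ext fun s hs => ?_
  rw [Measure.map_apply (sphereMap_measurable e) hs]
  have hpre : MeasurableSet (sphereMap e ⁻¹' s) := (sphereMap_measurable e) hs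
  rw [sphereMeasure, Measure.toSphere_apply' _ hpre, Measure.toSphere_apply' _ hs]
  congr 1
  have himg : (Subtype.val '' (sphereMap e ⁻¹' s)) = ⇑e ⁻¹' (Subtype.val '' s) := by
    ext x
    constructor
    · rintro ⟨Ω, hΩ, rfl⟩
      exact ⟨sphereMap e Ω, hΩ, rfl⟩
    · rintro ⟨Ω, hΩ, hx⟩
      have hxs : x ∈ S2 := by
        rw [mem_sphere_zero_iff_norm, ← e.norm_map, ← hx]
        exact mem_sphere_zero_iff_norm.1 Ω.2
      refine ⟨⟨x, hxs⟩, ?_, rfl⟩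
      show sphereMap e ⟨x, hxs⟩ ∈ s
      have : sphereMap e ⟨x, hxs⟩ = Ω := Subtype.ext hx.symm
      rwa [this]
  rw [himg]
  have hsmul : Ioo (0:ℝ) 1 • (⇑e ⁻¹' (Subtype.val '' s)) = ⇑e ⁻¹' (Ioo (0:ℝ) 1 • (Subtype.val '' s)) := by
    ext x
    simp only [Set.mem_smul, Set.mem_preimage]
    constructor
    · rintro ⟨c, hc, y, hy, rfl⟩
      exact ⟨c, hc, e y, hy, by simp [e.map_smul]⟩
    · rintro ⟨c, hc, y, hy, hx⟩
      refine ⟨c, hc, e.symm y, by simpa using hy, ?_⟩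
      apply e.injective
      simp [e.map_smul, hx]
  rw [hsmul]
  exact (e.measurePreserving).measure_preimage_emb
    (e.toHomeomorph.measurableEmbedding) _

lemma sphere_integral_comp (e : E3 ≃ₗᵢ[ℝ] E3) (g : S2 → ℝ) :
    ∫ Ω, g (sphereMap e Ω) ∂sphereMeasure = ∫ Ω, g Ω ∂sphereMeasure := by
  have hemb : MeasurableEmbedding (sphereMap e) :=
    (sphereMap_measurable e).measurableEmbedding (fun Ω Ω' h => by
      apply Subtype.ext
      exact e.injective (congrArg Subtype.val h))
  exact (sphereMap_measurePreserving e).integral_comp hemb g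

instance : IsFiniteMeasure sphereMeasure := by
  rw [sphereMeasure]; infer_instance

lemma gamma_52 : Real.Gamma (3 / 2 + 1) = 3 / 4 * Real.sqrt π := by
  rw [Real.Gamma_add_one (by norm_num)]
  have h32 : (3:ℝ)/2 = 1/2 + 1 := by norm_num
  rw [h32, Real.Gamma_add_one (by norm_num), Real.Gamma_one_half_eq]
  ring

lemma sphereMeasure_univ : sphereMeasure Set.univ = ENNReal.ofReal (4 * π) := by
  rw [sphereMeasure, Measure.toSphere_apply_univ, EuclideanSpace.volume_ball]
  simp only [finrank_euclideanSpace_fin, Fintype.card_fin, ENNReal.ofReal_one, one_pow, one_mul,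
    Nat.cast_ofNat]
  rw [gamma_52]
  have h2 : Real.sqrt π ≠ 0 := (Real.sqrt_pos.2 pi_pos).ne'
  have hs : Real.sqrt π ^ 3 / (3/4 * Real.sqrt π) = 4 * π / 3 := by
    have h1 : Real.sqrt π ^ 3 = π * Real.sqrt π := by
      rw [pow_succ, Real.sq_sqrt pi_nonneg]
    rw [h1]; field_simp
  rw [hs, show (3 : ENNReal) = ENNReal.ofReal 3 by simp [ENNReal.ofReal_ofNat],
    ← ENNReal.ofReal_mul (by norm_num)]
  congr 1
  ring

lemma sphereMeasure_univ_toReal : (sphereMeasure Set.univ).toReal = 4 * π := by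
  rw [sphereMeasure_univ, ENNReal.toReal_ofReal (by positivity)]

lemma continuous_coord (i : Fin 3) : Continuous fun Ω : S2 => (Ω : E3) i :=
  ((EuclideanSpace.proj i).continuous).comp continuous_subtype_val

lemma integrable_coord (i : Fin 3) :
    Integrable (fun Ω : S2 => (Ω : E3) i) sphereMeasure :=
  (continuous_coord i).integrable_of_hasCompactSupport (HasCompactSupport.of_compactSpace _)

lemma integrable_coord_mul (i j : Fin 3) :
    Integrable (fun Ω : S2 => (Ω : E3) i * (Ω : E3) j) sphereMeasure :=
  ((continuous_coord i).mul (continuous_coord j)).integrable_of_hasCompactSupport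
    (HasCompactSupport.of_compactSpace _)

noncomputable def reflIso (i : Fin 3) : E3 ≃ₗᵢ[ℝ] E3 :=
  LinearIsometryEquiv.piLpCongrRight 2
    (fun j => if j = i then LinearIsometryEquiv.neg ℝ else LinearIsometryEquiv.refl ℝ ℝ)

lemma reflIso_apply (i j : Fin 3) (x : E3) :
    (reflIso i x) j = if j = i then -(x j) else x j := by
  simp only [reflIso, LinearIsometryEquiv.piLpCongrRight_apply, PiLp.toLp_apply]
  split
  · next h => simp [h]
  · next h => simp

lemma integral_coord_eq_zero (i : Fin 3) :
    ∫ Ω, (Ω : E3) i ∂sphereMeasure = 0 := by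
  have h := sphere_integral_comp (reflIso i) (fun Ω => (Ω : E3) i)
  have h2 : ∀ Ω : S2, ((sphereMap (reflIso i) Ω : E3) i) = -((Ω : E3) i) := by
    intro Ω
    show (reflIso i (Ω : E3)) i = _
    rw [reflIso_apply, if_pos rfl]
  simp only [h2, integral_neg] at h
  linarith

lemma integral_coord_mul_eq_zero {i j : Fin 3} (hij : i ≠ j) :
    ∫ Ω, (Ω : E3) i * (Ω : E3) j ∂sphereMeasure = 0 := by
  have h := sphere_integral_comp (reflIso i) (fun Ω => (Ω : E3) i * (Ω : E3) j)
  have h2 : ∀ Ω : S2, ((sphereMap (reflIso i) Ω : E3) i * (sphereMap (reflIso i) Ω : E3) j)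
      = -((Ω : E3) i * (Ω : E3) j) := by
    intro Ω
    show (reflIso i (Ω : E3)) i * (reflIso i (Ω : E3)) j = _
    rw [reflIso_apply, reflIso_apply, if_pos rfl, if_neg (by simpa using hij.symm)]
    ring
  simp only [h2, integral_neg] at h
  linarith

lemma sum_coord_sq (Ω : S2) : ∑ j : Fin 3, ((Ω : E3) j)^2 = 1 := by
  have h := mem_sphere_zero_iff_norm.1 Ω.2
  rw [EuclideanSpace.norm_eq] at h
  have h2 : ∑ j : Fin 3, ‖(Ω : E3) j‖ ^ 2 = 1 := by
    rw [← Real.sqrt_eq_one]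
    exact h
  calc ∑ j : Fin 3, ((Ω : E3) j)^2 = ∑ j : Fin 3, ‖(Ω : E3) j‖ ^ 2 := by
        simp [Real.norm_eq_abs, sq_abs]
    _ = 1 := h2

lemma integral_coord_sq (i : Fin 3) :
    ∫ Ω, ((Ω : E3) i)^2 ∂sphereMeasure = 4 * π / 3 := by
  have hswap : ∀ k : Fin 3, ∫ Ω, ((Ω : E3) k)^2 ∂sphereMeasure
      = ∫ Ω, ((Ω : E3) 0)^2 ∂sphereMeasure := by
    intro k
    have h := sphere_integral_comp (LinearIsometryEquiv.piLpCongrLeft 2 ℝ ℝ (Equiv.swap k 0))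
      (fun Ω => ((Ω : E3) 0)^2)
    have h2 : ∀ Ω : S2,
        ((sphereMap (LinearIsometryEquiv.piLpCongrLeft 2 ℝ ℝ (Equiv.swap k 0)) Ω : E3) 0)^2
        = ((Ω : E3) k)^2 := by
      intro Ω
      show ((LinearIsometryEquiv.piLpCongrLeft 2 ℝ ℝ (Equiv.swap k 0)) (Ω : E3) 0)^2 = _
      rw [LinearIsometryEquiv.piLpCongrLeft_apply]
      congr 2
      show (Ω : E3) ((Equiv.swap k 0).symm 0) = (Ω : E3) k
      rw [Equiv.symm_swap, Equiv.swap_apply_right]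
    simp only [h2] at h
    exact h
  have hsum : ∑ j : Fin 3, ∫ Ω, ((Ω : E3) j)^2 ∂sphereMeasure = 4 * π := by
    rw [← integral_finset_sum _ (fun j _ => by
      have : Integrable (fun Ω : S2 => ((Ω : E3) j)^2) sphereMeasure := by
        simpa [sq] using integrable_coord_mul j j
      exact this)]
    simp only [sum_coord_sq]
    rw [integral_const, smul_eq_mul, mul_one, measureReal_def, sphereMeasure_univ_toReal]
  simp only [hswap] at hsum
  rw [Fin.sum_univ_three] at hsum
  rw [hswap i]
  linarith

lemma coord_abs_le_one (Ω : S2) (i : Fin 3) : ‖(Ω : E3) i‖ ≤ 1 := by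
  rw [Real.norm_eq_abs]
  have h1 : ((Ω : E3) i)^2 ≤ 1 := by
    have h2 := sum_coord_sq Ω
    calc ((Ω : E3) i)^2 ≤ ∑ j : Fin 3, ((Ω : E3) j)^2 :=
          Finset.single_le_sum (f := fun j => ((Ω : E3) j)^2) (fun j _ => sq_nonneg _) (Finset.mem_univ i)
      _ = 1 := h2
  nlinarith [sq_abs ((Ω : E3) i), abs_nonneg ((Ω : E3) i)]

/-- The decomposed multi-group reconstruction reproduces the group angular moments
exactly: `(1/4π) ∬ I_rec = ρ_g` and `(3/4π) ∬ Ω I_rec = R_g` componentwise. -/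
theorem reconstruction_reproduces_angular_moments
    (ν₁ ν₂ : ℝ) (hν₀ : 0 ≤ ν₁) (hν : ν₁ < ν₂)
    (B ω₁ ω₂ κ : ℝ → ℝ)
    (hB : IntervalIntegrable B volume ν₁ ν₂)
    (hω₁int : IntervalIntegrable ω₁ volume ν₁ ν₂)
    (hω₂int : IntervalIntegrable ω₂ volume ν₁ ν₂)
    (hκint : IntervalIntegrable κ volume ν₁ ν₂)
    (hκpos : ∀ ν ∈ Set.Icc ν₁ ν₂, 0 < κ ν)
    (hKpos : 0 < ∫ ν in ν₁..ν₂, κ ν)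
    (hω₁ : (∫ ν in ν₁..ν₂, ω₁ ν) = ν₂ - ν₁)
    (hω₂ : (∫ ν in ν₁..ν₂, ω₂ ν) = ν₂ - ν₁)
    (ρg : ℝ) (Rg : Fin 3 → ℝ)
    (Qg : Metric.sphere (0 : EuclideanSpace ℝ (Fin 3)) 1 → ℝ)
    (hQgInt : Integrable Qg sphereMeasure)
    (hQg0 : (4 * π)⁻¹ * ∫ Ω, Qg Ω ∂sphereMeasure = 0)
    (hQg1 : ∀ i : Fin 3, (4 * π)⁻¹ *
      ∫ Ω : Metric.sphere (0 : EuclideanSpace ℝ (Fin 3)) 1,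
        (Ω : EuclideanSpace ℝ (Fin 3)) i * Qg Ω ∂sphereMeasure = 0)
    (sρ : ℝ → ℝ)
    (hsρ : ∀ ν, sρ ν = (ν₂ - ν₁) * B ν - ω₂ ν * (∫ ν' in ν₁..ν₂, B ν'))
    (sR : Metric.sphere (0 : EuclideanSpace ℝ (Fin 3)) 1 → ℝ → ℝ)
    (hsR : ∀ Ω ν, sR Ω ν = ((ν₂ - ν₁) * κ ν / (∫ ν' in ν₁..ν₂, κ ν') - 1) *
      (∑ i : Fin 3, (Ω : EuclideanSpace ℝ (Fin 3)) i * Rg i))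
    (Irec : Metric.sphere (0 : EuclideanSpace ℝ (Fin 3)) 1 → ℝ → ℝ)
    (hIrec : ∀ Ω ν, Irec Ω ν = (ν₂ - ν₁)⁻¹ *
      (ω₁ ν * ρg + (∑ i : Fin 3, (Ω : EuclideanSpace ℝ (Fin 3)) i * Rg i) + Qg Ω
        + sρ ν + sR Ω ν)) :
    ((4 * π)⁻¹ * ∫ Ω, (∫ ν in ν₁..ν₂, Irec Ω ν) ∂sphereMeasure = ρg) ∧
    (∀ i : Fin 3, 3 * ((4 * π)⁻¹ *
      ∫ Ω : Metric.sphere (0 : EuclideanSpace ℝ (Fin 3)) 1,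
        (Ω : EuclideanSpace ℝ (Fin 3)) i * (∫ ν in ν₁..ν₂, Irec Ω ν) ∂sphereMeasure)
      = Rg i) := by
  have hΔ : ν₂ - ν₁ ≠ 0 := sub_ne_zero.2 hν.ne'
  have hK : (∫ ν' in ν₁..ν₂, κ ν') ≠ 0 := hKpos.ne'
  have hπ : (4 : ℝ) * π ≠ 0 := by positivity
  -- the frequency integral collapses
  have key : ∀ Ω : S2, (∫ ν in ν₁..ν₂, Irec Ω ν)
      = ρg + (∑ i : Fin 3, (Ω : E3) i * Rg i) + Qg Ω := by
    intro Ω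
    set r := ∑ i : Fin 3, (Ω : E3) i * Rg i with hr
    have hform : ∀ ν, Irec Ω ν = (ν₂ - ν₁)⁻¹ *
        (ρg * ω₁ ν + ((ν₂ - ν₁) * B ν - (∫ ν' in ν₁..ν₂, B ν') * ω₂ ν)
          + ((ν₂ - ν₁) * r / (∫ ν' in ν₁..ν₂, κ ν')) * κ ν + Qg Ω) := by
      intro ν
      rw [hIrec, hsρ, hsR, ← hr]
      ring
    rw [intervalIntegral.integral_congr (fun ν _ => hform ν)]
    have h1 : IntervalIntegrable (fun ν => ρg * ω₁ ν) volume ν₁ ν₂ := hω₁int.const_mul ρg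
    have h2 : IntervalIntegrable
        (fun ν => (ν₂ - ν₁) * B ν - (∫ ν' in ν₁..ν₂, B ν') * ω₂ ν) volume ν₁ ν₂ :=
      (hB.const_mul _).sub (hω₂int.const_mul _)
    have h3 : IntervalIntegrable
        (fun ν => ((ν₂ - ν₁) * r / (∫ ν' in ν₁..ν₂, κ ν')) * κ ν) volume ν₁ ν₂ :=
      hκint.const_mul _
    rw [intervalIntegral.integral_const_mul,
      intervalIntegral.integral_add ((h1.add h2).add h3) intervalIntegrable_const,
      intervalIntegral.integral_add (h1.add h2) h3,
      intervalIntegral.integral_add h1 h2,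
      intervalIntegral.integral_sub (hB.const_mul _) (hω₂int.const_mul _),
      intervalIntegral.integral_const_mul, intervalIntegral.integral_const_mul,
      intervalIntegral.integral_const_mul, intervalIntegral.integral_const_mul,
      intervalIntegral.integral_const, hω₁, hω₂, smul_eq_mul]
    field_simp
    ring
  have hintr : Integrable (fun Ω : S2 => ∑ i : Fin 3, (Ω : E3) i * Rg i) sphereMeasure :=
    integrable_finset_sum _ (fun i _ => (integrable_coord i).mul_const _)
  have hQg0' : ∫ Ω, Qg Ω ∂sphereMeasure = 0 := by
    rcases mul_eq_zero.1 hQg0 with h | h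
    · exact absurd h (inv_ne_zero hπ)
    · exact h
  constructor
  · simp only [key]
    have hfg : Integrable (fun Ω : S2 => ρg + ∑ i : Fin 3, (Ω : E3) i * Rg i) sphereMeasure :=
      (integrable_const ρg).add hintr
    rw [integral_add hfg hQgInt,
      integral_add (integrable_const ρg) hintr, integral_const,
      integral_finset_sum _ (fun i _ => (integrable_coord i).mul_const _)]
    simp only [integral_mul_const, integral_coord_eq_zero, zero_mul, Finset.sum_const_zero,
      smul_eq_mul, measureReal_def, sphereMeasure_univ_toReal, hQg0', add_zero]
    field_simp
  · intro i
    have hQg1' : ∫ Ω, (Ω : E3) i * Qg Ω ∂sphereMeasure = 0 := by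
      rcases mul_eq_zero.1 (hQg1 i) with h | h
      · exact absurd h (inv_ne_zero hπ)
      · exact h
    have hexp : ∀ Ω : S2, (Ω : E3) i * (ρg + (∑ j : Fin 3, (Ω : E3) j * Rg j) + Qg Ω)
        = (((Ω : E3) i * ρg) + ∑ j : Fin 3, ((Ω : E3) i * (Ω : E3) j) * Rg j)
          + (Ω : E3) i * Qg Ω := by
      intro Ω
      rw [mul_add, mul_add, Finset.mul_sum]
      simp only [← mul_assoc]
    simp only [key, hexp]
    have hi1 : Integrable (fun Ω : S2 => (Ω : E3) i * ρg) sphereMeasure :=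
      (integrable_coord i).mul_const _
    have hi2 : Integrable (fun Ω : S2 => ∑ j : Fin 3, ((Ω : E3) i * (Ω : E3) j) * Rg j)
        sphereMeasure :=
      integrable_finset_sum _ (fun j _ => (integrable_coord_mul i j).mul_const _)
    have hi3 : Integrable (fun Ω : S2 => (Ω : E3) i * Qg Ω) sphereMeasure :=
      hQgInt.bdd_mul (continuous_coord i).aestronglyMeasurable (Filter.Eventually.of_forall fun Ω => coord_abs_le_one Ω i)
    have hi12 : Integrable (fun Ω : S2 => (Ω : E3) i * ρg
        + ∑ j : Fin 3, ((Ω : E3) i * (Ω : E3) j) * Rg j) sphereMeasure := hi1.add hi2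
    rw [integral_add hi12 hi3, integral_add hi1 hi2,
      integral_finset_sum _ (fun j _ => (integrable_coord_mul i j).mul_const _)]
    simp only [integral_mul_const, integral_coord_eq_zero, zero_mul, hQg1', add_zero, zero_add]
    have hsum : ∑ j : Fin 3, (∫ Ω, (Ω : E3) i * (Ω : E3) j ∂sphereMeasure) * Rg j
        = (4 * π / 3) * Rg i := by
      rw [Finset.sum_eq_single i]
      · congr 1
        have := integral_coord_sq i
        simp only [pow_two] at this
        exact this
      · intro j _ hj
        rw [integral_coord_mul_eq_zero (Ne.symm hj), zero_mul]
      · intro h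
        exact absurd (Finset.mem_univ i) h
    rw [hsum]
    field_simp
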